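/- Let P(z) = Σ_{i=0}^k z^i A_i be a Hermitian matrix polynomial (all A_i Hermitian, n×n), and suppose there exist real numbers μ₁ < μ₂ < ... < μ_{k+1} such that (−1)^i P(μ_i) is positive definite for each i. Then all nk eigenvalues of P are real, counted with multiplicity; equivalently, det P(z) has nk real roots counted with multiplicity. -/

import Mathlib

open Polynomial Matrix
open scoped ComplexOrder

noncomputable def pencil {n : ℕ} (A B : Matrix (Fin n) (Fin n) ℂ) : Polynomial ℂ :=
  (A.map (fun a => Polynomial.C a) - (Polynomial.X : Polynomial ℂ) • B.map (fun a => Polynomial.C a)).det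

noncomputable def nPos {n : ℕ} {A : Matrix (Fin n) (Fin n) ℂ} (hA : A.IsHermitian) : ℕ :=
  (Finset.univ.filter fun i => 0 < hA.eigenvalues i).card

noncomputable def nZero {n : ℕ} {A : Matrix (Fin n) (Fin n) ℂ} (hA : A.IsHermitian) : ℕ :=
  (Finset.univ.filter fun i => hA.eigenvalues i = 0).card

noncomputable def nNeg {n : ℕ} {A : Matrix (Fin n) (Fin n) ℂ} (hA : A.IsHermitian) : ℕ :=
  (Finset.univ.filter fun i => hA.eigenvalues i < 0).card

noncomputable def pencilPosCount {n : ℕ} (A B : Matrix (Fin n) (Fin n) ℂ) : ℕ :=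
  ((pencil A B).roots.filter fun z => z.im = 0 ∧ 0 < z.re).card

noncomputable def pencilNegCount {n : ℕ} (A B : Matrix (Fin n) (Fin n) ℂ) : ℕ :=
  ((pencil A B).roots.filter fun z => z.im = 0 ∧ z.re < 0).card

noncomputable def pencilRealCount {n : ℕ} (A B : Matrix (Fin n) (Fin n) ℂ) : ℕ :=
  ((pencil A B).roots.filter fun z => z.im = 0).card

noncomputable def pencilComplexCount {n : ℕ} (A B : Matrix (Fin n) (Fin n) ℂ) : ℕ :=
  ((pencil A B).roots.filter fun z => z.im ≠ 0).card

section helpers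
variable {ι : Type*} {n : ℕ}

lemma sum_mulVec' (s : Finset ι) (M : ι → Matrix (Fin n) (Fin n) ℂ) (v : Fin n → ℂ) :
    (∑ i ∈ s, M i) *ᵥ v = ∑ i ∈ s, M i *ᵥ v := by
  induction s using Finset.cons_induction with
  | empty => simp [Matrix.zero_mulVec]
  | cons a s ha ih => simp [Finset.sum_cons, Matrix.add_mulVec, ih]

lemma dotProduct_sum' (s : Finset ι) (v : Fin n → ℂ) (w : ι → Fin n → ℂ) :
    v ⬝ᵥ (∑ i ∈ s, w i) = ∑ i ∈ s, v ⬝ᵥ w i := by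
  induction s using Finset.cons_induction with
  | empty => simp
  | cons a s ha ih => simp [Finset.sum_cons, dotProduct_add, ih]

lemma quad_real {A : Matrix (Fin n) (Fin n) ℂ} (hA : A.IsHermitian) (v : Fin n → ℂ) :
    (((star v ⬝ᵥ (A *ᵥ v)).re : ℂ)) = star v ⬝ᵥ (A *ᵥ v) := by
  rw [← Complex.conj_eq_iff_re]
  show star _ = _
  calc star (star v ⬝ᵥ (A *ᵥ v)) = star (A *ᵥ v) ⬝ᵥ v := (Matrix.star_dotProduct _ _).symm
  _ = (star v ᵥ* Aᴴ) ⬝ᵥ v := by rw [Matrix.star_mulVec]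
  _ = (star v ᵥ* A) ⬝ᵥ v := by rw [hA.eq]
  _ = star v ⬝ᵥ (A *ᵥ v) := (Matrix.dotProduct_mulVec _ _ _).symm

end helpers
open Polynomial

lemma sumCXpow_natDegree_le {R : Type*} [Semiring R] {k : ℕ} (c : Fin (k+1) → R) :
    (∑ i : Fin (k+1), Polynomial.C (c i) * X^(i:ℕ)).natDegree ≤ k := by
  apply Polynomial.natDegree_sum_le_of_forall_le
  intro i _
  exact (Polynomial.natDegree_C_mul_X_pow_le _ _).trans i.is_le

lemma sumCXpow_coeff_k {R : Type*} [Semiring R] {k : ℕ} (c : Fin (k+1) → R) :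
    (∑ i : Fin (k+1), Polynomial.C (c i) * X^(i:ℕ)).coeff k = c (Fin.last k) := by
  rw [Polynomial.finset_sum_coeff]
  rw [Finset.sum_eq_single (Fin.last k)]
  · simp [Polynomial.coeff_C_mul, Polynomial.coeff_X_pow]
  · intro i _ hi
    simp only [Polynomial.coeff_C_mul, Polynomial.coeff_X_pow]
    rw [if_neg, mul_zero]
    intro h
    exact hi (Fin.ext (by simpa [Fin.last] using h.symm))
  · simp

lemma aux_real {k : ℕ} (f : Polynomial ℝ) (hdeg : f.natDegree ≤ k)
    (mu : Fin (k+1) → ℝ) (hmu : StrictMono mu)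
    (hsign : ∀ i : Fin (k+1), 0 < (-1:ℝ)^(i:ℕ) * f.eval (mu i)) :
    f.natDegree = k ∧ ∀ z : ℂ, Polynomial.eval z (f.map (algebraMap ℝ ℂ)) = 0 → z.im = 0 := by
  have hf0 : f ≠ 0 := by
    intro h
    have := hsign 0
    simp [h] at this
  -- roots in each interval
  have key : ∀ i : Fin k, ∃ x, x ∈ Set.Ioo (mu i.castSucc) (mu i.succ) ∧ f.eval x = 0 := by
    intro i
    have h1 := hsign i.castSucc
    have h2 := hsign i.succ
    have hcs : ((i.castSucc : Fin (k+1)) : ℕ) = (i : ℕ) := rfl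
    have hs : ((i.succ : Fin (k+1)) : ℕ) = (i : ℕ) + 1 := rfl
    rw [hcs] at h1; rw [hs] at h2
    have hprod : f.eval (mu i.castSucc) * f.eval (mu i.succ) < 0 := by
      have hneg : (-1:ℝ)^(i:ℕ) * (-1:ℝ)^((i:ℕ)+1) = -1 := by
        rw [← pow_add]
        exact Odd.neg_one_pow ⟨(i:ℕ), by ring⟩
      nlinarith [mul_pos h1 h2, hneg]
    have hle : mu i.castSucc ≤ mu i.succ := (hmu (Fin.castSucc_lt_succ (i := i))).le
    have hcont : ContinuousOn (fun x => f.eval x) (Set.Icc (mu i.castSucc) (mu i.succ)) :=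
      (f.continuous_eval₂ _).continuousOn
    rcases mul_neg_iff.mp hprod with ⟨ha, hb⟩ | ⟨ha, hb⟩
    · obtain ⟨x, hx, hfx⟩ := intermediate_value_Ioo' (a := mu i.castSucc) (b := mu i.succ) hle hcont ⟨hb, ha⟩
      exact ⟨x, hx, hfx⟩
    · obtain ⟨x, hx, hfx⟩ := intermediate_value_Ioo (a := mu i.castSucc) (b := mu i.succ) hle hcont ⟨ha, hb⟩
      exact ⟨x, hx, hfx⟩
  choose r hr hr0 using key
  have hrmono : StrictMono r := by
    intro i j hij
    calc r i < mu i.succ := (hr i).2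
    _ ≤ mu j.castSucc := hmu.monotone (by rw [Fin.le_def]; have := Fin.lt_def.mp hij; exact Nat.succ_le_of_lt this)
    _ < r j := (hr j).1
  have himg : (Finset.univ.image r).card = k := by
    rw [Finset.card_image_of_injective _ hrmono.injective, Finset.card_univ, Fintype.card_fin]
  have hsub : (Finset.univ.image r) ⊆ f.roots.toFinset := by
    intro x hx
    obtain ⟨i, _, rfl⟩ := Finset.mem_image.mp hx
    rw [Multiset.mem_toFinset, Polynomial.mem_roots hf0]
    exact hr0 i
  have hk_le : k ≤ f.natDegree := by
    calc k = (Finset.univ.image r).card := himg.symm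
    _ ≤ f.roots.toFinset.card := Finset.card_le_card hsub
    _ ≤ Multiset.card f.roots := Multiset.toFinset_card_le _
    _ ≤ f.natDegree := f.card_roots'
  have hdegk : f.natDegree = k := le_antisymm hdeg hk_le
  refine ⟨hdegk, ?_⟩
  intro z hz
  by_contra hzim
  set g := f.map (algebraMap ℝ ℂ) with hg
  have hg0 : g ≠ 0 := (Polynomial.map_ne_zero_iff (algebraMap ℝ ℂ).injective).mpr hf0
  have hgdeg : g.natDegree = k := by rw [hg, Polynomial.natDegree_map, hdegk]
  have hsub2 : insert z (Finset.univ.image (fun i => ((r i : ℝ) : ℂ))) ⊆ g.roots.toFinset := by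
    intro x hx
    rw [Multiset.mem_toFinset, Polynomial.mem_roots hg0]
    rcases Finset.mem_insert.mp hx with rfl | hx
    · exact hz
    · obtain ⟨i, _, rfl⟩ := Finset.mem_image.mp hx
      show Polynomial.eval _ g = 0
      rw [hg, Polynomial.eval_map, show ((r i : ℝ):ℂ) = algebraMap ℝ ℂ (r i) from rfl,
        Polynomial.eval₂_at_apply, hr0 i, map_zero]
  have hcard2 : (insert z (Finset.univ.image (fun i => ((r i : ℝ) : ℂ)))).card = k + 1 := by
    rw [Finset.card_insert_of_notMem, Finset.card_image_of_injective, Finset.card_univ,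
      Fintype.card_fin]
    · exact fun a b hab => hrmono.injective (by exact_mod_cast hab)
    · intro hmem
      obtain ⟨i, _, hi⟩ := Finset.mem_image.mp hmem
      apply hzim
      rw [← hi]
      simp
  have : k + 1 ≤ k := by
    calc k + 1 = (insert z (Finset.univ.image (fun i => ((r i : ℝ) : ℂ)))).card := hcard2.symm
    _ ≤ g.roots.toFinset.card := Finset.card_le_card hsub2
    _ ≤ Multiset.card g.roots := Multiset.toFinset_card_le _
    _ ≤ g.natDegree := g.card_roots'
    _ = k := hgdeg
  omega

lemma key_lemma {n k : ℕ} (A : Fin (k + 1) → Matrix (Fin n) (Fin n) ℂ)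
    (hA : ∀ i, (A i).IsHermitian) (mu : Fin (k + 1) → ℝ) (hmu : StrictMono mu)
    (hdef : ∀ i : Fin (k + 1),
      (((-1 : ℂ) ^ (i : ℕ)) • ∑ j : Fin (k + 1), ((mu i : ℂ) ^ (j : ℕ)) • A j).PosDef)
    (v : Fin n → ℂ) (hv : v ≠ 0) :
    (star v ⬝ᵥ (A (Fin.last k) *ᵥ v) ≠ 0) ∧
    ∀ z : ℂ, (∑ i : Fin (k + 1), z ^ (i : ℕ) * (star v ⬝ᵥ (A i *ᵥ v))) = 0 → z.im = 0 := by
  set c : Fin (k + 1) → ℂ := fun i => star v ⬝ᵥ (A i *ᵥ v) with hc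
  have hreal : ∀ i, (((c i).re : ℂ)) = c i := fun i => quad_real (hA i) v
  set f : Polynomial ℝ := ∑ i : Fin (k + 1), Polynomial.C ((c i).re) * X ^ (i : ℕ) with hf
  have hdeg : f.natDegree ≤ k := sumCXpow_natDegree_le _
  have hfeval : ∀ x : ℝ, f.eval x = ∑ i : Fin (k + 1), (c i).re * x ^ (i : ℕ) := by
    intro x; simp [hf, Polynomial.eval_finset_sum]
  have hfevalC : ∀ z : ℂ, Polynomial.eval z (f.map (algebraMap ℝ ℂ)) =
      ∑ i : Fin (k + 1), z ^ (i : ℕ) * c i := by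
    intro z
    rw [hf, Polynomial.map_sum, Polynomial.eval_finset_sum]
    refine Finset.sum_congr rfl fun i _ => ?_
    simp only [Polynomial.map_mul, Polynomial.map_C, Polynomial.map_pow, Polynomial.map_X,
      Polynomial.eval_mul, Polynomial.eval_C, Polynomial.eval_pow, Polynomial.eval_X]
    rw [show (algebraMap ℝ ℂ) ((c i).re) = (((c i).re : ℝ) : ℂ) from rfl, hreal i, mul_comm]
  have hsign : ∀ i : Fin (k + 1), 0 < (-1 : ℝ) ^ (i : ℕ) * f.eval (mu i) := by
    intro i
    have h := (hdef i).dotProduct_mulVec_pos hv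
    have hcomp : star v ⬝ᵥ ((((-1 : ℂ) ^ (i : ℕ)) • ∑ j : Fin (k + 1),
        ((mu i : ℂ) ^ (j : ℕ)) • A j) *ᵥ v)
        = ((((-1 : ℝ) ^ (i : ℕ) * f.eval (mu i) : ℝ)) : ℂ) := by
      rw [Matrix.smul_mulVec, dotProduct_smul, sum_mulVec', dotProduct_sum']
      rw [hfeval]
      push_cast
      rw [smul_eq_mul, Finset.mul_sum, Finset.mul_sum]
      refine Finset.sum_congr rfl fun j _ => ?_
      simp only [Matrix.smul_mulVec, dotProduct_smul, smul_eq_mul,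
        Complex.ofReal_re, hreal j]
      ring
    rw [hcomp] at h
    exact Complex.zero_lt_real.mp h
  obtain ⟨hdegk, hroots⟩ := aux_real f hdeg mu hmu hsign
  have hf0 : f ≠ 0 := by
    intro h0
    have := hsign 0
    rw [h0] at this
    simp at this
  constructor
  · intro hzero
    have hcoef : f.coeff k = (c (Fin.last k)).re := sumCXpow_coeff_k _
    have : f.leadingCoeff ≠ 0 := Polynomial.leadingCoeff_ne_zero.mpr hf0
    rw [Polynomial.leadingCoeff, hdegk, hcoef] at this
    have hcz : c (Fin.last k) = 0 := hzero
    rw [hcz] at this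
    simp at this
  · intro z hz
    exact hroots z (by rw [hfevalC]; exact hz)


set_option maxHeartbeats 1000000 in
theorem stmt13 {n k : ℕ} (A : Fin (k + 1) → Matrix (Fin n) (Fin n) ℂ)
    (hA : ∀ i, (A i).IsHermitian) (mu : Fin (k + 1) → ℝ) (hmu : StrictMono mu)
    (hdef : ∀ i : Fin (k + 1),
      (((-1 : ℂ) ^ (i : ℕ)) • ∑ j : Fin (k + 1), ((mu i : ℂ) ^ (j : ℕ)) • A j).PosDef) :
    (∑ i : Fin (k + 1),
        ((Polynomial.X : Polynomial ℂ) ^ (i : ℕ)) • (A i).map (fun a => Polynomial.C a)).det.roots.card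
      = n * k ∧
    ∀ z ∈ (∑ i : Fin (k + 1),
        ((Polynomial.X : Polynomial ℂ) ^ (i : ℕ)) • (A i).map (fun a => Polynomial.C a)).det.roots,
      z.im = 0 := by

  set Q : Matrix (Fin n) (Fin n) (Polynomial ℂ) :=
    ∑ i : Fin (k + 1), ((Polynomial.X : Polynomial ℂ) ^ (i : ℕ)) • (A i).map (fun a => Polynomial.C a)
    with hQ
  have hent : ∀ a b, Q a b = ∑ i : Fin (k + 1), Polynomial.C (A i a b) * X ^ (i : ℕ) := by
    intro a b
    rw [hQ]
    simp only [Matrix.sum_apply, Matrix.smul_apply, Matrix.map_apply, smul_eq_mul]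
    exact Finset.sum_congr rfl fun i _ => mul_comm _ _
  have hdeg_ent : ∀ a b, (Q a b).natDegree ≤ k := by
    intro a b; rw [hent]; exact sumCXpow_natDegree_le _
  have hcoeff_ent : ∀ a b, (Q a b).coeff k = A (Fin.last k) a b := by
    intro a b; rw [hent]; exact sumCXpow_coeff_k _
  have hDcoeff : Q.det.coeff (n * k) = (A (Fin.last k)).det := by
    rw [Matrix.det_apply', Polynomial.finset_sum_coeff, Matrix.det_apply']
    refine Finset.sum_congr rfl fun σ _ => ?_
    rw [← Polynomial.C_eq_intCast, Polynomial.coeff_C_mul]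
    congr 1
    have hnk : n * k = (Finset.univ : Finset (Fin n)).card * k := by simp
    rw [hnk, Polynomial.coeff_prod_of_natDegree_le Finset.univ (fun i => Q (σ i) i) k (fun i _ => hdeg_ent (σ i) i)]
    exact Finset.prod_congr rfl fun i _ => hcoeff_ent _ _
  have hdetA : (A (Fin.last k)).det ≠ 0 := by
    intro hdet
    obtain ⟨v, hv, hAv⟩ := (Matrix.exists_mulVec_eq_zero_iff).mpr hdet
    exact (key_lemma A hA mu hmu hdef v hv).1 (by rw [hAv, dotProduct_zero])
  have hD0 : Q.det ≠ 0 := fun h => hdetA (by rw [← hDcoeff, h, Polynomial.coeff_zero])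
  have hdegle : Q.det.natDegree ≤ n * k := by
    rw [Matrix.det_apply']
    apply Polynomial.natDegree_sum_le_of_forall_le
    intro σ _
    refine (Polynomial.natDegree_mul_le).trans ?_
    rw [Polynomial.natDegree_intCast, zero_add]
    refine (Polynomial.natDegree_prod_le Finset.univ (fun i => Q (σ i) i)).trans ?_
    calc ∑ i : Fin n, (Q (σ i) i).natDegree ≤ ∑ _i : Fin n, k :=
          Finset.sum_le_sum fun i _ => hdeg_ent (σ i) i
    _ = n * k := by simp [Finset.sum_const, mul_comm]
  have hdegD : Q.det.natDegree = n * k :=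
    le_antisymm hdegle (Polynomial.le_natDegree_of_ne_zero (by rw [hDcoeff]; exact hdetA))
  have heval : ∀ z : ℂ, Q.det.eval z = ((∑ i : Fin (k + 1), (z ^ (i : ℕ)) • A i)).det := by
    intro z
    rw [show Q.det.eval z = (Polynomial.evalRingHom z) Q.det from rfl,
      RingHom.map_det (Polynomial.evalRingHom z) Q]
    congr 1
    ext a b
    rw [RingHom.mapMatrix_apply, Matrix.map_apply, hent]
    simp only [Polynomial.coe_evalRingHom, Polynomial.eval_finset_sum, Polynomial.eval_mul,
      Polynomial.eval_C, Polynomial.eval_pow, Polynomial.eval_X, Matrix.sum_apply,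
      Matrix.smul_apply, smul_eq_mul]
    exact Finset.sum_congr rfl fun i _ => mul_comm _ _
  constructor
  · rw [(Polynomial.splits_iff_card_roots).mp (IsAlgClosed.splits Q.det), hdegD]
  · intro z hz
    have hz0 : Q.det.eval z = 0 := (Polynomial.mem_roots hD0).mp hz
    rw [heval z] at hz0
    obtain ⟨v, hv, hAv⟩ := (Matrix.exists_mulVec_eq_zero_iff).mpr hz0
    apply (key_lemma A hA mu hmu hdef v hv).2 z
    have h0 : star v ⬝ᵥ ((∑ i : Fin (k + 1), (z ^ (i : ℕ)) • A i) *ᵥ v) = 0 := by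
      rw [hAv, dotProduct_zero]
    rw [sum_mulVec', dotProduct_sum'] at h0
    rw [← h0]
    refine Finset.sum_congr rfl fun i _ => ?_
    rw [Matrix.smul_mulVec, dotProduct_smul, smul_eq_mul]
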